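/- arXiv:1010.1597 — 4 statements merged into one kernel-verified Lean document; each statement's English description precedes it below -/
import Mathlib

section
/- Let A, B ⊆ F_q^2 be nonempty and suppose there exist a constant K ≥ 1 and a set W ⊆ F_q^2 with |W| ≤ K such that |B ∩ (B + c)| ≤ K for all c ∈ F_q^2 \ W. Then |A - B| ≥ (1/(2K)) · min(|A||B|, |B|²). -/
open Finset
open scoped Pointwise

set_option maxHeartbeats 1600000 in
theorem stmt_8 {F : Type*} [Field F] [Fintype F] [DecidableEq F]
    (A B : Finset (F × F)) (hA : A.Nonempty) (hB : B.Nonempty)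
    (K : ℝ) (hK : 1 ≤ K) (W : Finset (F × F)) (hW : (W.card : ℝ) ≤ K)
    (hBc : ∀ c : F × F, c ∉ W → ((B ∩ B.image (fun y => y + c)).card : ℝ) ≤ K) :
    (1 / (2 * K)) * min ((A.card : ℝ) * B.card) ((B.card : ℝ) ^ 2) ≤ (A - B).card := by
  classical
  set r : F × F → ℕ := fun d => ((A ×ˢ B).filter (fun p => p.1 - p.2 = d)).card with hr
  set s : F × F → ℕ := fun c => ((A ×ˢ A).filter (fun p => p.1 - p.2 = c)).card with hs
  set t : F × F → ℕ := fun c => ((B ×ˢ B).filter (fun p => p.1 - p.2 = c)).card with ht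
  -- fact 1 : total count of pairs
  have fact1 : ∑ d ∈ A - B, r d = A.card * B.card := by
    rw [← Finset.card_product]
    exact (Finset.card_eq_sum_card_fiberwise (fun p hp => by
      rw [Finset.mem_coe, Finset.mem_product] at hp
      exact Finset.sub_mem_sub hp.1 hp.2)).symm
  -- the quadruple set
  set Q : Finset (((F × F) × (F × F)) × ((F × F) × (F × F))) :=
    ((A ×ˢ B) ×ˢ (A ×ˢ B)).filter (fun p => p.1.1 - p.1.2 = p.2.1 - p.2.2) with hQ
  have fiber_left : ∀ d : F × F, Q.filter (fun p => p.1.1 - p.1.2 = d)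
      = ((A ×ˢ B).filter (fun p => p.1 - p.2 = d)) ×ˢ
        ((A ×ˢ B).filter (fun p => p.1 - p.2 = d)) := by
    intro d
    ext ⟨⟨a, b⟩, ⟨a', b'⟩⟩
    simp only [hQ, Finset.mem_filter, Finset.mem_product]
    constructor
    · rintro ⟨⟨⟨h1, h2⟩, h3⟩, h4⟩
      exact ⟨⟨h1, h4⟩, h2, by rw [← h3, h4]⟩
    · rintro ⟨⟨h1, h2⟩, h3, h4⟩
      exact ⟨⟨⟨h1, h3⟩, by rw [h2, h4]⟩, h2⟩
  have hQL : Q.card = ∑ d : F × F, r d ^ 2 := by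
    rw [Finset.card_eq_sum_card_fiberwise (f := fun p => p.1.1 - p.1.2)
      (t := Finset.univ) (fun x _ => Finset.mem_univ _)]
    refine Finset.sum_congr rfl fun d _ => ?_
    rw [fiber_left d, Finset.card_product, sq]
  have hQR : Q.card = ∑ c : F × F, s c * t c := by
    rw [Finset.card_eq_sum_card_fiberwise (f := fun p => p.1.1 - p.2.1)
      (t := Finset.univ) (fun x _ => Finset.mem_univ _)]
    refine Finset.sum_congr rfl fun c _ => ?_
    rw [← Finset.card_product]
    apply Finset.card_bij (fun p _ => ((p.1.1, p.2.1), (p.1.2, p.2.2)))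
    · rintro ⟨⟨a, b⟩, ⟨a', b'⟩⟩ hp
      simp only [hQ, Finset.mem_filter, Finset.mem_product] at hp ⊢
      obtain ⟨⟨⟨⟨ha, hb⟩, ha', hb'⟩, heq⟩, hc⟩ := hp
      refine ⟨⟨⟨ha, ha'⟩, hc⟩, ⟨hb, hb'⟩, ?_⟩
      linear_combination hc - heq
    · rintro ⟨⟨a, b⟩, ⟨a', b'⟩⟩ _ ⟨⟨c1, d1⟩, ⟨c1', d1'⟩⟩ _ h
      simp only [Prod.mk.injEq] at h
      obtain ⟨⟨e1, e2⟩, e3, e4⟩ := h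
      simp [Prod.ext_iff, e1, e2, e3, e4]
    · rintro ⟨⟨a, a'⟩, ⟨b, b'⟩⟩ hm
      simp only [Finset.mem_filter, Finset.mem_product] at hm
      obtain ⟨⟨⟨ha, ha'⟩, hc1⟩, ⟨hb, hb'⟩, hc2⟩ := hm
      refine ⟨((a, b), (a', b')), ?_, rfl⟩
      simp only [hQ, Finset.mem_filter, Finset.mem_product]
      exact ⟨⟨⟨⟨ha, hb⟩, ha', hb'⟩, by linear_combination hc1 - hc2⟩, hc1⟩
  -- fact 4 : t c is the intersection size
  have fact4 : ∀ c : F × F, t c = (B ∩ B.image (fun y => y + c)).card := by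
    intro c
    apply Finset.card_bij (fun p _ => p.1)
    · rintro ⟨b, b'⟩ hp
      simp only [ht, Finset.mem_filter, Finset.mem_product] at hp
      simp only [Finset.mem_inter, Finset.mem_image]
      exact ⟨hp.1.1, b', hp.1.2, by linear_combination -hp.2⟩
    · rintro ⟨b, b'⟩ hp ⟨c1, c2⟩ hq h
      simp only [ht, Finset.mem_filter, Finset.mem_product] at hp hq
      simp only at h
      exact Prod.ext h (by linear_combination h + hq.2 - hp.2)
    · intro b hb
      simp only [Finset.mem_inter, Finset.mem_image] at hb
      obtain ⟨hb1, y, hy, hyc⟩ := hb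
      refine ⟨(b, b - c), ?_, rfl⟩
      simp only [ht, Finset.mem_filter, Finset.mem_product]
      refine ⟨⟨hb1, ?_⟩, by ring⟩
      have : b - c = y := by linear_combination -hyc
      rw [this]; exact hy
  -- s c ≤ |A|, t c ≤ |B|
  have hsle : ∀ c, s c ≤ A.card := by
    intro c
    apply Finset.card_le_card_of_injOn (fun p => p.1)
    · intro p hp
      exact (Finset.mem_product.1 (Finset.mem_filter.1 hp).1).1
    · rintro ⟨a, a'⟩ hp ⟨b, b'⟩ hq h
      simp only [hs, Finset.coe_filter, Set.mem_setOf_eq] at hp hq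
      simp only at h
      exact Prod.ext h (by linear_combination h + hq.2 - hp.2)
  have htle : ∀ c, t c ≤ B.card := by
    intro c
    apply Finset.card_le_card_of_injOn (fun p => p.1)
    · intro p hp
      exact (Finset.mem_product.1 (Finset.mem_filter.1 hp).1).1
    · rintro ⟨a, a'⟩ hp ⟨b, b'⟩ hq h
      simp only [ht, Finset.coe_filter, Set.mem_setOf_eq] at hp hq
      simp only at h
      exact Prod.ext h (by linear_combination h + hq.2 - hp.2)
  have hssum : ∑ c : F × F, s c = A.card ^ 2 := by
    rw [sq, ← Finset.card_product]
    exact (Finset.card_eq_sum_card_fiberwise (fun x _ => Finset.mem_univ _)).symm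
  -- real numbers
  set a : ℝ := (A.card : ℝ) with ha
  set b : ℝ := (B.card : ℝ) with hbb
  set D : ℝ := ((A - B).card : ℝ) with hD
  set E : ℝ := ∑ c : F × F, (s c : ℝ) * (t c : ℝ) with hE
  have ha1 : 1 ≤ a := by
    have := Finset.card_pos.2 hA
    rw [ha]; exact_mod_cast this
  have hb1 : 1 ≤ b := by
    have := Finset.card_pos.2 hB
    rw [hbb]; exact_mod_cast this
  -- Cauchy-Schwarz
  have cauchy : (a * b) ^ 2 ≤ D * E := by
    have h1 : (a * b) ^ 2 = ((∑ d ∈ A - B, r d : ℕ) : ℝ) ^ 2 := by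
      rw [fact1]; push_cast; ring
    have h2 : ((∑ d ∈ A - B, r d : ℕ) : ℝ) = ∑ d ∈ A - B, (r d : ℝ) := by push_cast; rfl
    have h3 : (∑ d ∈ A - B, (r d : ℝ)) ^ 2 ≤ D * ∑ d ∈ A - B, (r d : ℝ) ^ 2 :=
      sq_sum_le_card_mul_sum_sq
    have h4 : ∑ d ∈ A - B, (r d : ℝ) ^ 2 ≤ ∑ d : F × F, (r d : ℝ) ^ 2 :=
      Finset.sum_le_sum_of_subset_of_nonneg (Finset.subset_univ _)
        (fun _ _ _ => by positivity)
    have h5 : ∑ d : F × F, (r d : ℝ) ^ 2 = E := by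
      rw [hE]
      have := hQL.symm.trans hQR
      have := congrArg (fun n : ℕ => (n : ℝ)) this
      push_cast at this
      exact this
    calc (a * b) ^ 2 = (∑ d ∈ A - B, (r d : ℝ)) ^ 2 := by rw [h1, h2]
      _ ≤ D * ∑ d ∈ A - B, (r d : ℝ) ^ 2 := h3
      _ ≤ D * ∑ d : F × F, (r d : ℝ) ^ 2 := by
          apply mul_le_mul_of_nonneg_left h4
          rw [hD]; positivity
      _ = D * E := by rw [h5]
  -- energy bound
  have energy : E ≤ K * (a ^ 2 + a * b) := by
    have split : E = ∑ c ∈ W, (s c : ℝ) * t c + ∑ c ∈ Wᶜ, (s c : ℝ) * t c := by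
      rw [hE, ← Finset.sum_add_sum_compl W]
    have hW1 : ∑ c ∈ W, (s c : ℝ) * t c ≤ K * (a * b) := by
      calc ∑ c ∈ W, (s c : ℝ) * t c ≤ ∑ c ∈ W, a * b := by
            apply Finset.sum_le_sum
            intro c _
            apply mul_le_mul
            · rw [ha]; exact_mod_cast hsle c
            · rw [hbb]; exact_mod_cast htle c
            · positivity
            · linarith
        _ = W.card * (a * b) := by rw [Finset.sum_const, nsmul_eq_mul]
        _ ≤ K * (a * b) := by
            apply mul_le_mul_of_nonneg_right hW
            nlinarith
    have hW2 : ∑ c ∈ Wᶜ, (s c : ℝ) * t c ≤ K * a ^ 2 := by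
      calc ∑ c ∈ Wᶜ, (s c : ℝ) * t c ≤ ∑ c ∈ Wᶜ, (s c : ℝ) * K := by
            apply Finset.sum_le_sum
            intro c hc
            apply mul_le_mul_of_nonneg_left _ (by positivity)
            rw [fact4 c]
            exact hBc c (Finset.mem_compl.1 hc)
        _ = K * ∑ c ∈ Wᶜ, (s c : ℝ) := by rw [← Finset.sum_mul]; ring
        _ ≤ K * ∑ c : F × F, (s c : ℝ) := by
            apply mul_le_mul_of_nonneg_left _ (by linarith)
            exact Finset.sum_le_sum_of_subset_of_nonneg (Finset.subset_univ _)
              (fun _ _ _ => by positivity)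
        _ = K * a ^ 2 := by
            congr 1
            rw [ha, ← Nat.cast_pow, ← hssum]
            push_cast; rfl
    linarith [split, hW1, hW2]
  -- finish
  have hK0 : (0 : ℝ) < K := by linarith
  have hD0 : (0 : ℝ) < D := by
    rw [hD]
    exact_mod_cast Finset.card_pos.2 (hA.sub hB)
  have hDE : (0 : ℝ) < D * E := lt_of_lt_of_le (by positivity) cauchy
  have hEnn : (0 : ℝ) ≤ E := Finset.sum_nonneg fun _ _ => by positivity
  have hE0 : (0 : ℝ) < E := by
    rcases hEnn.lt_or_eq with h | h
    · exact h
    · rw [← h, mul_zero] at hDE; exact absurd hDE (lt_irrefl 0)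
  have hmin : min (a * b) (b ^ 2) * (a ^ 2 + a * b) ≤ 2 * (a * b) ^ 2 := by
    rcases le_total a b with h | h
    · rw [min_eq_left (by nlinarith)]
      nlinarith
    · rw [min_eq_right (by nlinarith)]
      nlinarith
  have key : min (a * b) (b ^ 2) ≤ 2 * K * D := by
    have h1 : min (a * b) (b ^ 2) * E ≤ 2 * K * D * E := by
      calc min (a * b) (b ^ 2) * E ≤ min (a * b) (b ^ 2) * (K * (a ^ 2 + a * b)) := by
            apply mul_le_mul_of_nonneg_left energy
            apply le_min <;> positivity
        _ = K * (min (a * b) (b ^ 2) * (a ^ 2 + a * b)) := by ring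
        _ ≤ K * (2 * (a * b) ^ 2) := by
            apply mul_le_mul_of_nonneg_left hmin (by linarith)
        _ ≤ K * (2 * (D * E)) := by
            apply mul_le_mul_of_nonneg_left _ (by linarith)
            linarith [cauchy]
        _ = 2 * K * D * E := by ring
    exact le_of_mul_le_mul_right h1 hE0
  rw [div_mul_eq_mul_div, one_mul, div_le_iff₀ (by positivity)]
  calc min (a * b) (b ^ 2) ≤ 2 * K * D := key
    _ = D * (2 * K) := by ring
end

section
/- Let V ⊆ F_q^2 be a set such that |V ∩ (V + c)| ≤ K for every nonzero c ∈ F_q^2, where K ≥ 1. Then for any B ⊆ V and any nonempty A ⊆ F_q^2, |A - B| ≥ (1/(2K)) · min(|A||B|, |B|²). -/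
open Finset
open scoped Pointwise

theorem stmt_9 {F : Type*} [Field F] [Fintype F] [DecidableEq F]
    (V : Finset (F × F)) (K : ℝ) (hK : 1 ≤ K)
    (hV : ∀ c : F × F, c ≠ 0 → ((V ∩ V.image (fun v => v + c)).card : ℝ) ≤ K)
    (A B : Finset (F × F)) (hA : A.Nonempty) (hBV : B ⊆ V) :
    (1 / (2 * K)) * min ((A.card : ℝ) * B.card) ((B.card : ℝ) ^ 2) ≤ (A - B).card := by
  classical
  set D := A - B with hD
  set r : F × F → ℕ := fun d => ((A ×ˢ B).filter (fun p => p.1 - p.2 = d)).card with hr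
  -- total count
  have hsum : A.card * B.card = ∑ d ∈ D, r d := by
    rw [← Finset.card_product]
    apply Finset.card_eq_sum_card_fiberwise
    intro p hp
    change _ ∈ (_ : Finset _) at hp
    simp only [Finset.mem_product] at hp
    exact Finset.sub_mem_sub hp.1 hp.2
  -- energy set
  set E := ((A ×ˢ B) ×ˢ (A ×ˢ B)).filter
      (fun q : ((F × F) × (F × F)) × ((F × F) × (F × F)) => q.1.1 - q.1.2 = q.2.1 - q.2.2)
    with hE
  have henergy : E.card = ∑ d ∈ D, r d * r d := by
    rw [Finset.card_eq_sum_card_fiberwise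
      (f := fun q : ((F × F) × (F × F)) × ((F × F) × (F × F)) => q.1.1 - q.1.2) (t := D)
      (fun q hq => by
        change _ ∈ (_ : Finset _) at hq
        simp only [hE, Finset.mem_filter, Finset.mem_product] at hq
        exact Finset.sub_mem_sub hq.1.1.1 hq.1.1.2)]
    refine Finset.sum_congr rfl fun d hd => ?_
    have hfe : E.filter (fun q => q.1.1 - q.1.2 = d)
        = ((A ×ˢ B).filter (fun p => p.1 - p.2 = d)) ×ˢ ((A ×ˢ B).filter (fun p => p.1 - p.2 = d)) := by
      rw [← Finset.filter_product]
      rw [hE, Finset.filter_filter]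
      apply Finset.filter_congr
      intro q hq
      constructor
      · rintro ⟨h1, h2⟩; exact ⟨h2, by rw [← h1, h2]⟩
      · rintro ⟨h1, h2⟩; exact ⟨h1.trans h2.symm, h1⟩
    rw [hfe, Finset.card_product]
  -- difference-counting functions
  set fA : F × F → ℕ := fun c => ((A ×ˢ A).filter (fun p => p.2 - p.1 = c)).card with hfA
  set fB : F × F → ℕ := fun c => ((B ×ˢ B).filter (fun p => p.2 - p.1 = c)).card with hfB
  have hfAle : ∀ c, fA c ≤ A.card := by
    intro c
    apply Finset.card_le_card_of_injOn (fun p => p.1)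
    · intro p hp
      change _ ∈ (_ : Finset _) at hp
      simp only [Finset.mem_filter, Finset.mem_product] at hp
      exact hp.1.1
    · intro p hp q hq h
      simp only [Finset.mem_coe, Finset.mem_filter] at hp hq
      have h' : p.1 = q.1 := h
      have h2 : p.2 = q.2 := by linear_combination hp.2 - hq.2 + h'
      exact Prod.ext h' h2
  have hfBle : ∀ c, fB c ≤ B.card := by
    intro c
    apply Finset.card_le_card_of_injOn (fun p => p.1)
    · intro p hp
      change _ ∈ (_ : Finset _) at hp
      simp only [Finset.mem_filter, Finset.mem_product] at hp
      exact hp.1.1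
    · intro p hp q hq h
      simp only [Finset.mem_coe, Finset.mem_filter] at hp hq
      have h' : p.1 = q.1 := h
      have h2 : p.2 = q.2 := by linear_combination hp.2 - hq.2 + h'
      exact Prod.ext h' h2
  have hfBK : ∀ c : F × F, c ≠ 0 → (fB c : ℝ) ≤ K := by
    intro c hc
    refine le_trans ?_ (hV c hc)
    have hle : fB c ≤ (V ∩ V.image (fun v => v + c)).card := by
      apply Finset.card_le_card_of_injOn (fun p => p.2)
      · intro p hp
        change _ ∈ (_ : Finset _) at hp
        simp only [Finset.mem_filter, Finset.mem_product] at hp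
        have h2 : p.2 = p.1 + c := by linear_combination hp.2
        refine Finset.mem_inter.2 ⟨hBV hp.1.2, Finset.mem_image.2 ⟨p.1, hBV hp.1.1, h2.symm⟩⟩
      · intro p hp q hq h
        simp only [Finset.mem_coe, Finset.mem_filter] at hp hq
        have h' : p.2 = q.2 := h
        have h1 : p.1 = q.1 := by linear_combination h' - hp.2 + hq.2
        exact Prod.ext h1 h'
    exact_mod_cast hle
  have hfAsum : ∑ c : F × F, fA c = A.card * A.card := by
    rw [← Finset.card_product]
    exact (Finset.card_eq_sum_card_fiberwise (f := fun p : (F × F) × (F × F) => p.2 - p.1)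
      (t := Finset.univ) (fun p _ => Finset.mem_univ _)).symm
  -- bound the energy fiberwise by the shift c
  have hEfiber : E.card = ∑ c : F × F, (E.filter (fun q => q.2.1 - q.1.1 = c)).card :=
    Finset.card_eq_sum_card_fiberwise (fun q _ => Finset.mem_univ _)
  have hfiberle : ∀ c : F × F,
      (E.filter (fun q => q.2.1 - q.1.1 = c)).card ≤ fA c * fB c := by
    intro c
    rw [hfA, hfB, ← Finset.card_product]
    apply Finset.card_le_card_of_injOn
      (fun q => ((q.1.1, q.2.1), (q.1.2, q.2.2)))
    · intro q hq
      change _ ∈ (_ : Finset _) at hq ⊢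
      simp only [Finset.mem_filter, Finset.mem_product, hE] at hq ⊢
      obtain ⟨⟨⟨⟨ha1, hb1⟩, ha2, hb2⟩, heq⟩, hc⟩ := hq
      refine ⟨⟨⟨ha1, ha2⟩, hc⟩, ⟨hb1, hb2⟩, ?_⟩
      linear_combination hc + heq
    · intro p hp q hq h
      simp only [Prod.mk.injEq] at h
      exact Prod.ext (Prod.ext h.1.1 h.2.1) (Prod.ext h.1.2 h.2.2)
  -- real-number bound on energy
  have hEreal : (E.card : ℝ) ≤ (A.card : ℝ) * B.card + K * ((A.card : ℝ) * A.card) := by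
    have h1 : (E.card : ℝ) ≤ ∑ c : F × F, (fA c : ℝ) * fB c := by
      rw [hEfiber]
      push_cast
      apply Finset.sum_le_sum
      intro c _
      exact_mod_cast hfiberle c
    have h2 : ∑ c : F × F, (fA c : ℝ) * fB c
        = (fA 0 : ℝ) * fB 0 + ∑ c ∈ Finset.univ.erase (0 : F × F), (fA c : ℝ) * fB c :=
      (Finset.add_sum_erase Finset.univ (fun c => (fA c : ℝ) * fB c) (Finset.mem_univ 0)).symm
    have h3 : (fA 0 : ℝ) * fB 0 ≤ (A.card : ℝ) * B.card := by
      have := hfAle 0; have := hfBle 0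
      have hA0 : (fA 0 : ℝ) ≤ A.card := by exact_mod_cast hfAle 0
      have hB0 : (fB 0 : ℝ) ≤ B.card := by exact_mod_cast hfBle 0
      exact mul_le_mul hA0 hB0 (by positivity) (by positivity)
    have h4 : ∑ c ∈ Finset.univ.erase (0 : F × F), (fA c : ℝ) * fB c
        ≤ K * ((A.card : ℝ) * A.card) := by
      calc ∑ c ∈ Finset.univ.erase (0 : F × F), (fA c : ℝ) * fB c
          ≤ ∑ c ∈ Finset.univ.erase (0 : F × F), (fA c : ℝ) * K := by
            apply Finset.sum_le_sum
            intro c hc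
            exact mul_le_mul_of_nonneg_left (hfBK c (Finset.mem_erase.1 hc).1) (by positivity)
        _ = K * ∑ c ∈ Finset.univ.erase (0 : F × F), (fA c : ℝ) := by
            rw [Finset.mul_sum]; exact Finset.sum_congr rfl fun c _ => mul_comm _ _
        _ ≤ K * ∑ c : F × F, (fA c : ℝ) := by
            apply mul_le_mul_of_nonneg_left _ (by linarith)
            apply Finset.sum_le_sum_of_subset_of_nonneg (Finset.erase_subset _ _)
            intro c _ _; positivity
        _ = K * ((A.card : ℝ) * A.card) := by
            rw [show ∑ c : F × F, (fA c : ℝ) = ((∑ c : F × F, fA c : ℕ) : ℝ) by push_cast; rfl,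
              hfAsum]; push_cast; ring
    linarith
  -- Cauchy-Schwarz
  have hcs : ((A.card : ℝ) * B.card) ^ 2 ≤ (D.card : ℝ) * E.card := by
    have := sq_sum_le_card_mul_sum_sq (s := D) (f := fun d => (r d : ℝ))
    calc ((A.card : ℝ) * B.card) ^ 2 = (∑ d ∈ D, (r d : ℝ)) ^ 2 := by
          rw [show ∑ d ∈ D, (r d : ℝ) = ((∑ d ∈ D, r d : ℕ) : ℝ) by push_cast; rfl, ← hsum]
          push_cast; ring
      _ ≤ (D.card : ℝ) * ∑ d ∈ D, (r d : ℝ) ^ 2 := this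
      _ = (D.card : ℝ) * E.card := by
          rw [henergy]; push_cast
          exact congrArg _ (Finset.sum_congr rfl fun x _ => pow_two _)
  -- final algebra
  set a := (A.card : ℝ) with ha
  set b := (B.card : ℝ) with hb
  set d := (D.card : ℝ) with hd
  have ha1 : 1 ≤ a := by
    rw [ha]; exact_mod_cast Finset.card_pos.2 hA
  have hb0 : 0 ≤ b := by rw [hb]; positivity
  have hd0 : 0 ≤ d := by rw [hd]; positivity
  have hkey : (a * b) ^ 2 ≤ d * (a * b + K * (a * a)) :=
    le_trans hcs (mul_le_mul_of_nonneg_left hEreal hd0)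
  have h2K : (0 : ℝ) < 2 * K := by linarith
  rw [div_mul_eq_mul_div, one_mul, div_le_iff₀ h2K]
  rcases le_total (a * b) (b ^ 2) with h | h
  · rw [min_eq_left h]
    rcases eq_or_lt_of_le hb0 with hbz | hbz
    · rw [← hbz]
      simp only [mul_zero]
      exact mul_nonneg hd0 h2K.le
    · have hapos : (0:ℝ) < a := lt_of_lt_of_le one_pos ha1
      have habpos : 0 < a * b := mul_pos hapos hbz
      have hab : a ≤ b := le_of_mul_le_mul_right (h.trans_eq (pow_two b)) hbz
      have e1 : a * a ≤ a * b := mul_le_mul_of_nonneg_left hab hapos.le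
      have e2 : a * b ≤ K * (a * b) := le_mul_of_one_le_left habpos.le hK
      have hstep : a * b + K * (a * a) ≤ (2 * K) * (a * b) := by
        have := mul_le_mul_of_nonneg_left e1 (by linarith : (0:ℝ) ≤ K)
        linarith
      have h5 : (a * b) ^ 2 ≤ d * ((2 * K) * (a * b)) :=
        le_trans hkey (mul_le_mul_of_nonneg_left hstep hd0)
      have h6 : (a * b) * (a * b) ≤ (d * (2 * K)) * (a * b) := by
        calc (a * b) * (a * b) = (a * b) ^ 2 := by ring
          _ ≤ d * ((2 * K) * (a * b)) := h5
          _ = (d * (2 * K)) * (a * b) := by ring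
      exact le_of_mul_le_mul_right h6 habpos
  · rw [min_eq_right h]
    have hapos : (0:ℝ) < a := lt_of_lt_of_le one_pos ha1
    have hba : b ≤ a := by
      rcases eq_or_lt_of_le hb0 with hbz | hbz
      · linarith
      · have hbb : b * b ≤ a * b := by rw [← pow_two]; exact h
        exact le_of_mul_le_mul_right hbb hbz
    have ha2 : (0:ℝ) < a * a := mul_pos hapos hapos
    have e1 : a * b ≤ a * a := mul_le_mul_of_nonneg_left hba hapos.le
    have e2 : a * a ≤ K * (a * a) := le_mul_of_one_le_left ha2.le hK
    have hstep : a * b + K * (a * a) ≤ (2 * K) * (a * a) := by linarith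
    have h5 : (a * b) ^ 2 ≤ d * ((2 * K) * (a * a)) :=
      le_trans hkey (mul_le_mul_of_nonneg_left hstep hd0)
    have h6 : b ^ 2 * (a * a) ≤ (d * (2 * K)) * (a * a) := by
      calc b ^ 2 * (a * a) = (a * b) ^ 2 := by ring
        _ ≤ d * ((2 * K) * (a * a)) := h5
        _ = (d * (2 * K)) * (a * a) := by ring
    exact le_of_mul_le_mul_right h6 ha2
end

section
/- Let q be odd, and let A, B ⊆ F_q^2 with |A| ≥ αq and |B| ≥ αq for some α > 0. Suppose there exist K ≥ 1 and W ⊆ F_q^2 with |W| ≤ K such that |B ∩ (B + c)| ≤ K for all c ∈ F_q^2 \ W. Then the distance set Δ(A,B) = {‖x - y‖ : x ∈ A, y ∈ B} satisfies |Δ(A,B)| ≥ (α²/(4K)) · q. -/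
open Finset
open scoped Pointwise

private lemma sq_fiber_card_le {F : Type*} [Field F] [Fintype F] [DecidableEq F] (s : F) :
    (univ.filter (fun y : F => y ^ 2 = s)).card ≤ 2 := by
  rcases (univ.filter (fun y : F => y ^ 2 = s)).eq_empty_or_nonempty with h | ⟨y₀, hy₀⟩
  · simp [h]
  · simp only [mem_filter, mem_univ, true_and] at hy₀
    have hsub : (univ.filter (fun y : F => y ^ 2 = s)) ⊆ {y₀, -y₀} := by
      intro y hy
      simp only [mem_filter, mem_univ, true_and] at hy
      have h0 : (y - y₀) * (y + y₀) = 0 := by linear_combination hy - hy₀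
      rcases mul_eq_zero.mp h0 with h | h
      · simp [sub_eq_zero.mp h]
      · simp [eq_neg_of_add_eq_zero_left h]
    exact (card_le_card hsub).trans ((card_insert_le _ _).trans (by simp))

private lemma norm_fiber_card_le {F : Type*} [Field F] [Fintype F] [DecidableEq F] (r : F) :
    (univ.filter (fun x : F × F => x.1 ^ 2 + x.2 ^ 2 = r)).card ≤ 2 * Fintype.card F := by
  rw [card_eq_sum_card_fiberwise (f := fun x : F × F => x.1) (t := univ) (fun x _ => mem_univ _)]
  calc ∑ a : F, ((univ.filter (fun x : F × F => x.1 ^ 2 + x.2 ^ 2 = r)).filter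
        (fun x => x.1 = a)).card
      ≤ ∑ _a : F, 2 := by
        refine sum_le_sum fun a _ => ?_
        refine le_trans (card_le_card_of_injOn (fun x => x.2) ?_ ?_) (sq_fiber_card_le (r - a^2))
        · intro x hx
          simp only [mem_coe, mem_filter, mem_univ, true_and] at hx ⊢
          obtain ⟨h1, h2⟩ := hx
          subst h2
          linear_combination h1
        · intro x hx y hy hxy
          simp only [mem_filter, mem_univ, true_and, coe_filter, Set.mem_setOf_eq] at hx hy
          exact Prod.ext (hx.2.trans hy.2.symm) hxy
    _ = 2 * Fintype.card F := by simp [mul_comm]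

/-- general fiberwise-product counting identity -/
private lemma sum_fiber_mul_card {G : Type*} [AddCommGroup G] [Fintype G] [DecidableEq G]
    (P Q R T : Finset G) :
    ∑ c : G, ((P ×ˢ Q).filter (fun p => p.1 - p.2 = c)).card *
        ((R ×ˢ T).filter (fun p => p.1 - p.2 = c)).card =
      (((P ×ˢ Q) ×ˢ (R ×ˢ T)).filter
        (fun pp => pp.1.1 - pp.1.2 = pp.2.1 - pp.2.2)).card := by
  have e1 : (((P ×ˢ Q) ×ˢ (R ×ˢ T)).filter
        (fun pp => pp.1.1 - pp.1.2 = pp.2.1 - pp.2.2)).card =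
      ∑ c : G, ((((P ×ˢ Q) ×ˢ (R ×ˢ T)).filter
        (fun pp => pp.1.1 - pp.1.2 = pp.2.1 - pp.2.2)).filter
        (fun pp => pp.1.1 - pp.1.2 = c)).card :=
    card_eq_sum_card_fiberwise (fun _ _ => mem_univ _)
  rw [e1]
  refine sum_congr rfl fun c _ => ?_
  have hfib : ((((P ×ˢ Q) ×ˢ (R ×ˢ T)).filter
        (fun pp => pp.1.1 - pp.1.2 = pp.2.1 - pp.2.2)).filter
        (fun pp => pp.1.1 - pp.1.2 = c))
      = ((P ×ˢ Q).filter (fun p => p.1 - p.2 = c)) ×ˢ ((R ×ˢ T).filter (fun p => p.1 - p.2 = c)) := by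
    ext pp
    simp only [mem_filter, mem_product]
    constructor
    · rintro ⟨⟨⟨h1, h2⟩, h3⟩, h4⟩
      exact ⟨⟨h1, h4⟩, h2, h3 ▸ h4⟩
    · rintro ⟨⟨h1, h4⟩, h2, h5⟩
      exact ⟨⟨⟨h1, h2⟩, h4.trans h5.symm⟩, h4⟩
  rw [hfib, card_product]

/-- the reshuffling bijection -/
private lemma energy_reshuffle {G : Type*} [AddCommGroup G] [DecidableEq G]
    (A B : Finset G) :
    (((A ×ˢ B) ×ˢ (A ×ˢ B)).filter
        (fun pp => pp.1.1 - pp.1.2 = pp.2.1 - pp.2.2)).card =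
      (((A ×ˢ A) ×ˢ (B ×ˢ B)).filter
        (fun pp => pp.1.1 - pp.1.2 = pp.2.1 - pp.2.2)).card := by
  refine card_nbij' (fun pp => ((pp.1.1, pp.2.1), (pp.1.2, pp.2.2)))
    (fun pp => ((pp.1.1, pp.2.1), (pp.1.2, pp.2.2))) ?_ ?_ (by intro _ _; rfl) (by intro _ _; rfl)
  · intro pp hpp
    simp only [mem_coe, mem_filter, mem_product] at hpp ⊢
    obtain ⟨⟨⟨h1, h2⟩, h3, h4⟩, h5⟩ := hpp
    exact ⟨⟨⟨h1, h3⟩, h2, h4⟩, sub_eq_sub_iff_sub_eq_sub.mp h5⟩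
  · intro pp hpp
    simp only [mem_coe, mem_filter, mem_product] at hpp ⊢
    obtain ⟨⟨⟨h1, h2⟩, h3, h4⟩, h5⟩ := hpp
    exact ⟨⟨⟨h1, h3⟩, h2, h4⟩, sub_eq_sub_iff_sub_eq_sub.mpr h5⟩

set_option maxHeartbeats 2000000 in
theorem stmt_10 {F : Type*} [Field F] [Fintype F] [DecidableEq F]
    (hq : Odd (Fintype.card F)) (A B : Finset (F × F)) (α : ℝ) (hα : 0 < α)
    (hA : α * (Fintype.card F : ℝ) ≤ A.card) (hB : α * (Fintype.card F : ℝ) ≤ B.card)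
    (K : ℝ) (hK : 1 ≤ K) (W : Finset (F × F)) (hW : (W.card : ℝ) ≤ K)
    (hBc : ∀ c : F × F, c ∉ W → ((B ∩ B.image (fun y => y + c)).card : ℝ) ≤ K) :
    (α ^ 2 / (4 * K)) * (Fintype.card F : ℝ) ≤
      (((A ×ˢ B).image (fun p => (p.1.1 - p.2.1) ^ 2 + (p.1.2 - p.2.2) ^ 2)).card : ℝ) := by
  classical
  set q := Fintype.card F with hqdef
  have hq0 : (0:ℝ) < q := by exact_mod_cast Fintype.card_pos
  have hK0 : (0:ℝ) < K := lt_of_lt_of_le one_pos hK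
  have haR : (0:ℝ) < A.card := lt_of_lt_of_le (by positivity) hA
  have hbR : (0:ℝ) < B.card := lt_of_lt_of_le (by positivity) hB
  set D : Finset (F × F) := (A ×ˢ B).image (fun p => p.1 - p.2) with hD
  -- (1) the fibers of the difference map partition A × B
  have h1 : ∑ c ∈ D, ((A ×ˢ B).filter (fun p => p.1 - p.2 = c)).card = A.card * B.card := by
    rw [← card_product]
    exact (card_eq_sum_card_fiberwise fun p hp => mem_image_of_mem _ hp).symm
  -- (2) Cauchy-Schwarz
  have hCS : ((A.card : ℝ) * B.card)^2 ≤ (D.card : ℝ) *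
      ∑ c ∈ D, (((A ×ˢ B).filter (fun p => p.1 - p.2 = c)).card : ℝ)^2 := by
    have hcs := sq_sum_le_card_mul_sum_sq (s := D)
      (f := fun c => (((A ×ˢ B).filter (fun p => p.1 - p.2 = c)).card : ℝ))
    calc ((A.card : ℝ) * B.card)^2
        = (∑ c ∈ D, (((A ×ˢ B).filter (fun p => p.1 - p.2 = c)).card : ℝ))^2 := by
          rw [← Nat.cast_sum, h1]; push_cast; ring
      _ ≤ _ := hcs
  -- (3) extend sum to univ
  have hext : ∑ c ∈ D, (((A ×ˢ B).filter (fun p => p.1 - p.2 = c)).card : ℝ)^2 ≤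
      ∑ c : F × F, (((A ×ˢ B).filter (fun p => p.1 - p.2 = c)).card : ℝ)^2 :=
    sum_le_sum_of_subset_of_nonneg (subset_univ D) (fun _ _ _ => by positivity)
  -- (4) energy identity
  have hEid : ∑ c : F × F, (((A ×ˢ B).filter (fun p => p.1 - p.2 = c)).card : ℝ)^2 =
      ∑ c : F × F, (((A ×ˢ A).filter (fun p => p.1 - p.2 = c)).card : ℝ) *
        (((B ×ˢ B).filter (fun p => p.1 - p.2 = c)).card : ℝ) := by
    have hnat : ∑ c : F × F, ((A ×ˢ B).filter (fun p => p.1 - p.2 = c)).card ^ 2 =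
        ∑ c : F × F, ((A ×ˢ A).filter (fun p => p.1 - p.2 = c)).card *
          ((B ×ˢ B).filter (fun p => p.1 - p.2 = c)).card := by
      rw [sum_fiber_mul_card A A B B, ← energy_reshuffle A B, ← sum_fiber_mul_card A B A B]
      refine sum_congr rfl fun c _ => ?_
      rw [sq]
    exact_mod_cast congrArg (fun n : ℕ => (n : ℝ)) hnat
  -- (5) pointwise bounds on fibers
  have hfA : ∀ t : F × F, ((A ×ˢ A).filter (fun p => p.1 - p.2 = t)).card ≤ A.card := by
    intro t
    refine card_le_card_of_injOn (fun p => p.1)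
      (fun p hp => (mem_product.mp (mem_filter.mp hp).1).1) ?_
    intro p hp p' hp' h
    simp only [coe_filter, Set.mem_setOf_eq] at hp hp'
    have e : p.1 - p.2 = p'.1 - p'.2 := hp.2.trans hp'.2.symm
    exact Prod.ext h (by linear_combination h - e)
  have hgB : ∀ t : F × F, ((B ×ˢ B).filter (fun p => p.1 - p.2 = t)).card ≤ B.card := by
    intro t
    refine card_le_card_of_injOn (fun p => p.1)
      (fun p hp => (mem_product.mp (mem_filter.mp hp).1).1) ?_
    intro p hp p' hp' h
    simp only [coe_filter, Set.mem_setOf_eq] at hp hp'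
    have e : p.1 - p.2 = p'.1 - p'.2 := hp.2.trans hp'.2.symm
    exact Prod.ext h (by linear_combination h - e)
  have hsumf : ∑ t : F × F, ((A ×ˢ A).filter (fun p => p.1 - p.2 = t)).card
      = A.card * A.card := by
    rw [← card_product]
    exact (card_eq_sum_card_fiberwise fun p _ => mem_univ _).symm
  -- (6) differenced-B fibers are intersections with translates
  have hgEq : ∀ t : F × F, ((B ×ˢ B).filter (fun p => p.1 - p.2 = t)).card =
      (B ∩ B.image (fun y => y + t)).card := by
    intro t
    refine card_nbij' (fun p => p.1) (fun x => (x, x - t)) ?_ ?_ ?_ ?_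
    · intro p hp
      simp only [mem_coe, mem_filter, mem_product] at hp
      rw [mem_coe, mem_inter, mem_image]
      exact ⟨hp.1.1, p.2, hp.1.2, by linear_combination -hp.2⟩
    · intro x hx
      rw [mem_coe, mem_inter, mem_image] at hx
      obtain ⟨hxB, y, hyB, hyx⟩ := hx
      simp only [mem_coe, mem_filter, mem_product]
      have hxt : x - t = y := by linear_combination -hyx
      exact ⟨⟨hxB, by rw [hxt]; exact hyB⟩, by ring⟩
    · intro p hp
      simp only [mem_coe, mem_filter, mem_product] at hp
      exact Prod.ext rfl (by linear_combination hp.2)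
    · intro x hx; rfl
  -- (7) energy bound
  have hEb : ∑ t : F × F, (((A ×ˢ A).filter (fun p => p.1 - p.2 = t)).card : ℝ) *
      (((B ×ˢ B).filter (fun p => p.1 - p.2 = t)).card : ℝ) ≤
      K * (A.card:ℝ)^2 + K * ((A.card:ℝ) * B.card) := by
    rw [← sum_filter_add_sum_filter_not univ (fun t => t ∈ W)]
    have hWeq : univ.filter (fun t : F × F => t ∈ W) = W := by
      rw [filter_mem_eq_inter, univ_inter]
    have hp1 : ∑ t ∈ univ.filter (fun t : F × F => t ∈ W),
        (((A ×ˢ A).filter (fun p => p.1 - p.2 = t)).card : ℝ) *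
        (((B ×ˢ B).filter (fun p => p.1 - p.2 = t)).card : ℝ) ≤ K * ((A.card:ℝ) * B.card) := by
      rw [hWeq]
      calc ∑ t ∈ W, (((A ×ˢ A).filter (fun p => p.1 - p.2 = t)).card : ℝ) *
            (((B ×ˢ B).filter (fun p => p.1 - p.2 = t)).card : ℝ)
          ≤ ∑ _t ∈ W, (A.card : ℝ) * B.card := by
            refine sum_le_sum fun t _ => ?_
            exact mul_le_mul (by exact_mod_cast hfA t) (by exact_mod_cast hgB t)
              (by positivity) (by positivity)
        _ = W.card * ((A.card:ℝ) * B.card) := by rw [sum_const, nsmul_eq_mul]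
        _ ≤ K * ((A.card:ℝ) * B.card) :=
            mul_le_mul_of_nonneg_right hW (by positivity)
    have hp2 : ∑ t ∈ univ.filter (fun t : F × F => ¬ t ∈ W),
        (((A ×ˢ A).filter (fun p => p.1 - p.2 = t)).card : ℝ) *
        (((B ×ˢ B).filter (fun p => p.1 - p.2 = t)).card : ℝ) ≤ K * (A.card:ℝ)^2 := by
      calc ∑ t ∈ univ.filter (fun t : F × F => ¬ t ∈ W),
            (((A ×ˢ A).filter (fun p => p.1 - p.2 = t)).card : ℝ) *
            (((B ×ˢ B).filter (fun p => p.1 - p.2 = t)).card : ℝ)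
          ≤ ∑ t ∈ univ.filter (fun t : F × F => ¬ t ∈ W),
            (((A ×ˢ A).filter (fun p => p.1 - p.2 = t)).card : ℝ) * K := by
            refine sum_le_sum fun t ht => ?_
            refine mul_le_mul_of_nonneg_left ?_ (by positivity)
            rw [hgEq t]
            exact hBc t (by simpa using (mem_filter.mp ht).2)
        _ = (∑ t ∈ univ.filter (fun t : F × F => ¬ t ∈ W),
              (((A ×ˢ A).filter (fun p => p.1 - p.2 = t)).card : ℝ)) * K := by
            rw [← sum_mul]
        _ ≤ (∑ t : F × F, (((A ×ˢ A).filter (fun p => p.1 - p.2 = t)).card : ℝ)) * K := by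
            refine mul_le_mul_of_nonneg_right
              (sum_le_sum_of_subset_of_nonneg (subset_univ _) (fun _ _ _ => by positivity))
              (by positivity)
        _ = K * (A.card:ℝ)^2 := by
            rw [← Nat.cast_sum, hsumf]; push_cast; ring
    linarith
  -- combine (2)-(7)
  have key : ((A.card:ℝ) * B.card)^2 ≤
      (D.card:ℝ) * (K * (A.card:ℝ)^2 + K * ((A.card:ℝ) * B.card)) :=
    hCS.trans (mul_le_mul_of_nonneg_left ((hext.trans_eq hEid).trans hEb) (by positivity))
  -- (8) number of points with a given norm is at most 2q
  set Δ : Finset F := (A ×ˢ B).image (fun p => (p.1.1 - p.2.1) ^ 2 + (p.1.2 - p.2.2) ^ 2) with hΔ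
  have hΔD : Δ = D.image (fun x : F × F => x.1^2 + x.2^2) := by
    rw [hΔ, hD, image_image]
    refine image_congr fun p _ => ?_
    simp [Prod.fst_sub, Prod.snd_sub, Function.comp]
  have hDcard : D.card ≤ Δ.card * (2 * q) := by
    rw [hΔD]
    have e2 : D.card = ∑ v ∈ D.image (fun x : F × F => x.1^2 + x.2^2),
        (D.filter (fun x => x.1^2 + x.2^2 = v)).card :=
      card_eq_sum_card_fiberwise (fun x hx => mem_image_of_mem _ hx)
    rw [e2]
    calc ∑ v ∈ D.image (fun x : F × F => x.1^2 + x.2^2),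
          (D.filter (fun x => x.1^2 + x.2^2 = v)).card
        ≤ ∑ _v ∈ D.image (fun x : F × F => x.1^2 + x.2^2), 2 * q := by
          refine sum_le_sum fun v _ => ?_
          exact le_trans (card_le_card (fun x hx =>
            mem_filter.mpr ⟨mem_univ _, (mem_filter.mp hx).2⟩)) (norm_fiber_card_le v)
      _ = (D.image (fun x : F × F => x.1^2 + x.2^2)).card * (2 * q) := by
          rw [sum_const, smul_eq_mul]
  -- (9) final arithmetic
  have hab : α*(q:ℝ)*(α*(q:ℝ)) ≤ (A.card:ℝ)*B.card := mul_le_mul hA hB (by positivity) haR.le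
  have hbb : α*(q:ℝ)*(α*(q:ℝ)) ≤ (B.card:ℝ)*B.card := mul_le_mul hB hB (by positivity) hbR.le
  have h2ab : α*(q:ℝ)*(α*(q:ℝ))*((A.card:ℝ)+B.card) ≤
      2*((A.card:ℝ)*((B.card:ℝ)*B.card)) := by
    nlinarith [mul_le_mul_of_nonneg_left hbb haR.le, mul_le_mul_of_nonneg_right hab hbR.le]
  have hDle : (D.card : ℝ) ≤ (Δ.card:ℝ) * (2*(q:ℝ)) := by exact_mod_cast hDcard
  rw [div_mul_eq_mul_div, div_le_iff₀ (by linarith : (0:ℝ) < 4*K)]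
  have hpos : (0:ℝ) < (q:ℝ) * ((A.card:ℝ) * ((A.card:ℝ)+B.card)) := by positivity
  refine le_of_mul_le_mul_right ?_ hpos
  calc α^2*(q:ℝ)*((q:ℝ)*((A.card:ℝ)*((A.card:ℝ)+B.card)))
      = (α*(q:ℝ)*(α*(q:ℝ))*((A.card:ℝ)+B.card))*(A.card:ℝ) := by ring
    _ ≤ (2*((A.card:ℝ)*((B.card:ℝ)*B.card)))*(A.card:ℝ) :=
        mul_le_mul_of_nonneg_right h2ab haR.le
    _ = 2*(((A.card:ℝ)*B.card)^2) := by ring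
    _ ≤ 2*((D.card:ℝ) * (K * (A.card:ℝ)^2 + K * ((A.card:ℝ) * B.card))) := by linarith
    _ ≤ 2*(((Δ.card:ℝ) * (2*(q:ℝ))) * (K * (A.card:ℝ)^2 + K * ((A.card:ℝ) * B.card))) := by
        have hnn : (0:ℝ) ≤ K * (A.card:ℝ)^2 + K * ((A.card:ℝ) * B.card) :=
          add_nonneg (mul_nonneg hK0.le (sq_nonneg _))
            (mul_nonneg hK0.le (mul_nonneg haR.le hbR.le))
        nlinarith [hDle, hnn]
    _ = ((Δ.card:ℝ)*(4*K))*((q:ℝ)*((A.card:ℝ)*((A.card:ℝ)+B.card))) := by ring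
end

section
/- Let A, B ⊆ F_q^d be nonempty, and suppose |B̂(m)| ≤ C·q^β for all nonzero m ∈ F_q^d, where C > 0 and β ∈ ℝ. Then |A - B| ≥ (1/2)·min(q^d, |A||B|²/(C²·q^{2d+2β})). -/
open Finset
open scoped Pointwise

/-- The normalized finite-field Fourier transform of the indicator of `E`. -/
noncomputable def ftE {F : Type*} [Field F] [Fintype F] {d : ℕ} (χ : AddChar F ℂ)
    (E : Finset (Fin d → F)) (m : Fin d → F) : ℂ :=
  (∑ x ∈ E, χ (-(∑ i, x i * m i))) / (Fintype.card F : ℂ) ^ d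

set_option linter.unusedSectionVars false
section aux
variable {F : Type*} [Field F] [Fintype F] [DecidableEq F] {d : ℕ}

lemma addchar_map_sum {ι : Type*} (χ : AddChar F ℂ) (s : Finset ι) (f : ι → F) :
    χ (∑ i ∈ s, f i) = ∏ i ∈ s, χ (f i) := by
  induction s using Finset.cons_induction with
  | empty => simp
  | cons a s ha ih => rw [Finset.sum_cons, Finset.prod_cons, AddChar.map_add_eq_mul, ih]

lemma sum_char_mul (χ : AddChar F ℂ) (hχ : χ ≠ 1) (a : F) :
    ∑ t : F, χ (a * t) = if a = 0 then (Fintype.card F : ℂ) else 0 := by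
  split_ifs with h
  · simp [h, Finset.card_univ]
  · have h1 : χ.mulShift a ≠ 1 := by
      intro hc
      exact hχ ((AddChar.mulShift_unit_eq_one_iff χ (isUnit_iff_ne_zero.2 h)).1 hc)
    have h0 : χ.mulShift a ≠ 0 := by
      rw [AddChar.ne_zero_iff]
      exact AddChar.ne_one_iff.1 h1
    have := AddChar.sum_eq_zero_iff_ne_zero.2 h0
    simpa [AddChar.mulShift_apply] using this

lemma sum_char_dot (χ : AddChar F ℂ) (hχ : χ ≠ 1) (v : Fin d → F) :
    ∑ m : Fin d → F, χ (∑ i, v i * m i) = if v = 0 then ((Fintype.card F : ℂ)) ^ d else 0 := by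
  have h1 : ∀ m : Fin d → F, χ (∑ i, v i * m i) = ∏ i, χ (v i * m i) := fun m =>
    addchar_map_sum χ univ _
  simp_rw [h1]
  rw [← Fintype.piFinset_univ, ← Finset.prod_univ_sum (fun _ => (univ : Finset F)) (fun i t => χ (v i * t))]
  simp_rw [sum_char_mul χ hχ]
  by_cases hv : v = 0
  · simp [hv, Finset.card_univ]
  · rw [if_neg hv]
    obtain ⟨i, hi⟩ := Function.ne_iff.1 hv
    have hi' : v i ≠ 0 := by simpa using hi
    exact Finset.prod_eq_zero (mem_univ i) (by simp [hi'])

end aux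

section aux2
variable {F : Type*} [Field F] [Fintype F] [DecidableEq F] {d : ℕ}

lemma sum_over_m {ι : Type*} [DecidableEq ι] (χ : AddChar F ℂ) (hχ : χ ≠ 1) (S : Finset ι)
    (w : ι → Fin d → F) :
    ∑ m : Fin d → F, ∑ p ∈ S, χ (∑ i, w p i * m i)
      = (Fintype.card F : ℂ) ^ d * ((S.filter (fun p => w p = 0)).card : ℂ) := by
  rw [Finset.sum_comm]
  rw [Finset.sum_congr rfl (fun p _ => sum_char_dot χ hχ (w p)), ← Finset.sum_filter]
  rw [Finset.sum_const, nsmul_eq_mul, mul_comm]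

lemma ftE_mul_conj (χ : AddChar F ℂ) (E E' : Finset (Fin d → F)) (m : Fin d → F) :
    ftE χ E m * (starRingEnd ℂ) (ftE χ E' m)
      = (∑ p ∈ E ×ˢ E', χ (∑ i, (p.2 i - p.1 i) * m i))
        / ((Fintype.card F : ℂ) ^ d * (Fintype.card F : ℂ) ^ d) := by
  unfold ftE
  rw [map_div₀, map_sum, map_pow, Complex.conj_natCast]
  have h1 : ∀ y : Fin d → F,
      (starRingEnd ℂ) (χ (-(∑ i, y i * m i))) = χ (∑ i, y i * m i) := by
    intro y; rw [← AddChar.map_neg_eq_conj, neg_neg]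
  simp_rw [h1]
  rw [div_mul_div_comm, Finset.sum_mul_sum]
  congr 1
  rw [Finset.sum_product]
  refine Finset.sum_congr rfl fun x _ => Finset.sum_congr rfl fun y _ => ?_
  rw [← AddChar.map_add_eq_mul]
  congr 1
  rw [← Finset.sum_neg_distrib, ← Finset.sum_add_distrib]
  exact Finset.sum_congr rfl fun i _ => by ring

lemma ftE_planch (χ : AddChar F ℂ) (hχ : χ ≠ 1) (A : Finset (Fin d → F)) :
    ∑ m : Fin d → F, ftE χ A m * (starRingEnd ℂ) (ftE χ A m)
      = (A.card : ℂ) / (Fintype.card F : ℂ) ^ d := by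
  simp_rw [ftE_mul_conj χ A A]
  rw [← Finset.sum_div, sum_over_m χ hχ]
  have hfil : ((A ×ˢ A).filter (fun p => (fun i => p.2 i - p.1 i) = 0)) = A.diag := by
    ext p
    simp only [Finset.mem_filter, Finset.mem_product, Finset.mem_diag, funext_iff,
      Pi.zero_apply, sub_eq_zero]
    constructor
    · rintro ⟨⟨h1, _⟩, h3⟩
      exact ⟨h1, fun i => (h3 i).symm⟩
    · rintro ⟨h1, h2⟩
      exact ⟨⟨h1, funext h2 ▸ h1⟩, fun i => by rw [h2 i]⟩
  rw [hfil, Finset.diag_card]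
  have hq : ((Fintype.card F : ℂ)) ^ d ≠ 0 := by
    exact pow_ne_zero d (Nat.cast_ne_zero.2 Fintype.card_ne_zero)
  field_simp

end aux2

section aux3
variable {F : Type*} [Field F] [Fintype F] [DecidableEq F] {d : ℕ}

lemma ftE_energy (χ : AddChar F ℂ) (hχ : χ ≠ 1) (A B : Finset (Fin d → F)) :
    ∑ m : Fin d → F,
        (ftE χ A m * (starRingEnd ℂ) (ftE χ A m)) * (ftE χ B m * (starRingEnd ℂ) (ftE χ B m))
      = ((((A ×ˢ B) ×ˢ (A ×ˢ B)).filter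
          (fun pp => pp.1.1 - pp.1.2 = pp.2.1 - pp.2.2)).card : ℂ)
        / ((Fintype.card F : ℂ) ^ d) ^ 3 := by
  have hstep : ∀ m : Fin d → F,
      (ftE χ A m * (starRingEnd ℂ) (ftE χ A m)) * (ftE χ B m * (starRingEnd ℂ) (ftE χ B m))
        = (∑ pp ∈ (A ×ˢ B) ×ˢ (A ×ˢ B),
            χ (∑ i, ((pp.1.2 i - pp.1.1 i) + (pp.2.1 i - pp.2.2 i)) * m i))
          / ((Fintype.card F : ℂ) ^ d) ^ 4 := by
    intro m
    have h0 : (ftE χ A m * (starRingEnd ℂ) (ftE χ A m)) * (ftE χ B m * (starRingEnd ℂ) (ftE χ B m))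
        = (ftE χ A m * (starRingEnd ℂ) (ftE χ B m))
          * (starRingEnd ℂ) (ftE χ A m * (starRingEnd ℂ) (ftE χ B m)) := by
      rw [map_mul, Complex.conj_conj]; ring
    rw [h0, ftE_mul_conj χ A B m, map_div₀, map_sum, map_mul, map_pow, Complex.conj_natCast]
    have h1 : ∀ p : (Fin d → F) × (Fin d → F),
        (starRingEnd ℂ) (χ (∑ i, (p.2 i - p.1 i) * m i))
          = χ (∑ i, (p.1 i - p.2 i) * m i) := by
      intro p
      rw [← AddChar.map_neg_eq_conj]
      congr 1
      rw [← Finset.sum_neg_distrib]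
      exact Finset.sum_congr rfl fun i _ => by ring
    simp_rw [h1]
    rw [div_mul_div_comm, Finset.sum_mul_sum, ← Finset.sum_product']
    congr 1
    · refine Finset.sum_congr rfl fun pp _ => ?_
      rw [← AddChar.map_add_eq_mul]
      congr 1
      rw [← Finset.sum_add_distrib]
      exact Finset.sum_congr rfl fun i _ => by ring
    · ring
  simp_rw [hstep]
  rw [← Finset.sum_div, sum_over_m χ hχ]
  have hfil : (((A ×ˢ B) ×ˢ (A ×ˢ B)).filter
      (fun pp => (fun i => (pp.1.2 i - pp.1.1 i) + (pp.2.1 i - pp.2.2 i)) = 0))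
      = ((A ×ˢ B) ×ˢ (A ×ˢ B)).filter (fun pp => pp.1.1 - pp.1.2 = pp.2.1 - pp.2.2) := by
    refine Finset.filter_congr fun pp _ => ?_
    simp only [funext_iff, Pi.zero_apply, Pi.sub_apply]
    constructor
    · intro h i
      have := h i
      linear_combination -this
    · intro h i
      have := h i
      linear_combination -this
  rw [hfil]
  have hq : ((Fintype.card F : ℂ)) ^ d ≠ 0 := pow_ne_zero d (Nat.cast_ne_zero.2 Fintype.card_ne_zero)
  field_simp

end aux3

section aux4
variable {F : Type*} [Field F] [Fintype F] [DecidableEq F] {d : ℕ}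

lemma count_sum (A B : Finset (Fin d → F)) :
    ∑ z ∈ A - B, ((A ×ˢ B).filter (fun p => p.1 - p.2 = z)).card = A.card * B.card := by
  rw [← Finset.card_product]
  exact (Finset.card_eq_sum_card_fiberwise (fun p hp => by
    rw [Finset.mem_coe, Finset.mem_product] at hp
    exact Finset.sub_mem_sub hp.1 hp.2)).symm

lemma count_sq (A B : Finset (Fin d → F)) :
    ∑ z ∈ A - B, (((A ×ˢ B).filter (fun p => p.1 - p.2 = z)).card) ^ 2
      = (((A ×ˢ B) ×ˢ (A ×ˢ B)).filter (fun pp => pp.1.1 - pp.1.2 = pp.2.1 - pp.2.2)).card := by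
  have h1 : (((A ×ˢ B) ×ˢ (A ×ˢ B)).filter
        (fun pp => pp.1.1 - pp.1.2 = pp.2.1 - pp.2.2)).card
      = ∑ z ∈ A - B, ((((A ×ˢ B) ×ˢ (A ×ˢ B)).filter
          (fun pp => pp.1.1 - pp.1.2 = pp.2.1 - pp.2.2)).filter
            (fun pp => pp.1.1 - pp.1.2 = z)).card := by
    apply Finset.card_eq_sum_card_fiberwise
    intro pp hpp
    rw [Finset.mem_coe, Finset.mem_filter, Finset.mem_product] at hpp
    have h2 := hpp.1.1
    rw [Finset.mem_product] at h2
    exact Finset.sub_mem_sub h2.1 h2.2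
  rw [h1]
  refine Finset.sum_congr rfl fun z _ => ?_
  have h3 : ((((A ×ˢ B) ×ˢ (A ×ˢ B)).filter
        (fun pp => pp.1.1 - pp.1.2 = pp.2.1 - pp.2.2)).filter
          (fun pp => pp.1.1 - pp.1.2 = z))
      = ((A ×ˢ B) ×ˢ (A ×ˢ B)).filter
        (fun pp => (pp.1.1 - pp.1.2 = z) ∧ (pp.2.1 - pp.2.2 = z)) := by
    rw [Finset.filter_filter]
    refine Finset.filter_congr fun pp _ => ?_
    constructor
    · rintro ⟨h, h'⟩
      exact ⟨h', h ▸ h'⟩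
    · rintro ⟨h, h'⟩
      exact ⟨h.trans h'.symm, h⟩
  have h4 := Finset.filter_product (s := A ×ˢ B) (t := A ×ˢ B)
    (fun p : (Fin d → F) × (Fin d → F) => p.1 - p.2 = z)
    (fun p : (Fin d → F) × (Fin d → F) => p.1 - p.2 = z)
  rw [h3, h4, Finset.card_product, sq]

end aux4

lemma final_arith (D a b N K T : ℝ) (ha : 0 < a) (hb : 0 < b) (hN : 0 < N) (hK : 0 < K)
    (hD : 0 ≤ D) (hCS : (a * b) ^ 2 ≤ D * T) (hT : T ≤ a ^ 2 * b ^ 2 / N + K * a * N ^ 2) :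
    (1 / 2 : ℝ) * min N (a * b ^ 2 / (K * N ^ 2)) ≤ D := by
  have key : ∀ X : ℝ, 0 < X → T ≤ 2 * X → (1 / 2 : ℝ) * ((a * b) ^ 2 / X) ≤ D := by
    intro X hX hTX
    have h6 : (a * b) ^ 2 ≤ D * (2 * X) :=
      hCS.trans (mul_le_mul_of_nonneg_left hTX hD)
    calc (1 / 2 : ℝ) * ((a * b) ^ 2 / X) ≤ (1 / 2 : ℝ) * ((D * (2 * X)) / X) := by gcongr
      _ = D := by field_simp
  rcases le_total (a ^ 2 * b ^ 2 / N) (K * a * N ^ 2) with h | h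
  · have hkey := key (K * a * N ^ 2) (by positivity) (by linarith)
    have he : (a * b) ^ 2 / (K * a * N ^ 2) = a * b ^ 2 / (K * N ^ 2) := by
      field_simp
    rw [he] at hkey
    refine le_trans ?_ hkey
    exact mul_le_mul_of_nonneg_left (min_le_right _ _) (by norm_num)
  · have hkey := key (a ^ 2 * b ^ 2 / N) (by positivity) (by linarith)
    have he : (a * b) ^ 2 / (a ^ 2 * b ^ 2 / N) = N := by
      field_simp
    rw [he] at hkey
    refine le_trans ?_ hkey
    exact mul_le_mul_of_nonneg_left (min_le_left _ _) (by norm_num)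

section aux5
variable {F : Type*} [Field F] [Fintype F] [DecidableEq F] {d : ℕ}

lemma real_planch (χ : AddChar F ℂ) (hχ : χ ≠ 1) (A : Finset (Fin d → F)) :
    ∑ m : Fin d → F, ‖ftE χ A m‖ ^ 2
      = (A.card : ℝ) / (Fintype.card F : ℝ) ^ d := by
  apply Complex.ofReal_injective
  have h2 : ((∑ m : Fin d → F, ‖ftE χ A m‖ ^ 2 : ℝ) : ℂ)
      = ∑ m : Fin d → F, ftE χ A m * (starRingEnd ℂ) (ftE χ A m) := by
    push_cast
    exact Finset.sum_congr rfl fun m _ => by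
      rw [← Complex.ofReal_pow, Complex.sq_norm, Complex.mul_conj]
  rw [h2, ftE_planch χ hχ A]
  push_cast
  ring

lemma real_energy (χ : AddChar F ℂ) (hχ : χ ≠ 1) (A B : Finset (Fin d → F)) :
    ∑ m : Fin d → F, ‖ftE χ A m‖ ^ 2 * ‖ftE χ B m‖ ^ 2
      = ((((A ×ˢ B) ×ˢ (A ×ˢ B)).filter
          (fun pp => pp.1.1 - pp.1.2 = pp.2.1 - pp.2.2)).card : ℝ)
        / ((Fintype.card F : ℝ) ^ d) ^ 3 := by
  apply Complex.ofReal_injective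
  have h2 : ((∑ m : Fin d → F,
        ‖ftE χ A m‖ ^ 2 * ‖ftE χ B m‖ ^ 2 : ℝ) : ℂ)
      = ∑ m : Fin d → F,
          (ftE χ A m * (starRingEnd ℂ) (ftE χ A m))
            * (ftE χ B m * (starRingEnd ℂ) (ftE χ B m)) := by
    push_cast
    exact Finset.sum_congr rfl fun m _ => by
      rw [← Complex.ofReal_pow, ← Complex.ofReal_pow, Complex.sq_norm, Complex.sq_norm,
        Complex.mul_conj, Complex.mul_conj]
  rw [h2, ftE_energy χ hχ A B]
  push_cast
  ring

lemma ftE_zero_abs (χ : AddChar F ℂ) (E : Finset (Fin d → F)) :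
    ‖ftE χ E 0‖ = (E.card : ℝ) / (Fintype.card F : ℝ) ^ d := by
  have h : ftE χ E 0 = (((E.card : ℝ) / (Fintype.card F : ℝ) ^ d : ℝ) : ℂ) := by
    unfold ftE
    simp only [Pi.zero_apply, mul_zero, Finset.sum_const_zero, neg_zero,
      AddChar.map_zero_eq_one, Finset.sum_const, nsmul_eq_mul, mul_one]
    push_cast
    ring
  rw [h, Complex.norm_real, Real.norm_eq_abs, abs_of_nonneg (by positivity)]

end aux5

theorem stmt_11 {F : Type*} [Field F] [Fintype F] [DecidableEq F] {d : ℕ} (hd : 1 ≤ d)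
    (χ : AddChar F ℂ) (hχ : χ ≠ 1) (A B : Finset (Fin d → F))
    (hA : A.Nonempty) (hB : B.Nonempty) (C : ℝ) (hC : 0 < C) (β : ℝ)
    (hdecay : ∀ m : Fin d → F, m ≠ 0 → ‖ftE χ B m‖ ≤ C * (Fintype.card F : ℝ) ^ β) :
    (1 / 2 : ℝ) * min ((Fintype.card F : ℝ) ^ (d : ℝ))
        ((A.card : ℝ) * (B.card : ℝ) ^ 2 / (C ^ 2 * (Fintype.card F : ℝ) ^ (2 * (d : ℝ) + 2 * β)))
      ≤ ((A - B).card : ℝ) := by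
  classical
  have hQ : (0 : ℝ) < (Fintype.card F : ℝ) := by exact_mod_cast Fintype.card_pos
  set Q : ℝ := (Fintype.card F : ℝ) with hQdef
  have hN : (0 : ℝ) < Q ^ d := by positivity
  have ha : (0 : ℝ) < A.card := by exact_mod_cast Finset.card_pos.2 hA
  have hb : (0 : ℝ) < B.card := by exact_mod_cast Finset.card_pos.2 hB
  have hK : (0 : ℝ) < (C * Q ^ β) ^ 2 := by positivity
  set T : ℕ := (((A ×ˢ B) ×ˢ (A ×ˢ B)).filter
      (fun pp => pp.1.1 - pp.1.2 = pp.2.1 - pp.2.2)).card with hTdef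
  -- Cauchy–Schwarz
  have h1 : ∑ z ∈ A - B, (((A ×ˢ B).filter (fun p => p.1 - p.2 = z)).card : ℝ)
      = (A.card : ℝ) * B.card := by exact_mod_cast count_sum A B
  have h2 : ∑ z ∈ A - B, (((A ×ˢ B).filter (fun p => p.1 - p.2 = z)).card : ℝ) ^ 2
      = (T : ℝ) := by exact_mod_cast count_sq A B
  have hCS : ((A.card : ℝ) * B.card) ^ 2 ≤ ((A - B).card : ℝ) * T := by
    calc ((A.card : ℝ) * B.card) ^ 2
        = (∑ z ∈ A - B, (((A ×ˢ B).filter (fun p => p.1 - p.2 = z)).card : ℝ)) ^ 2 := by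
          rw [h1]
      _ ≤ ((A - B).card : ℝ)
          * ∑ z ∈ A - B, (((A ×ˢ B).filter (fun p => p.1 - p.2 = z)).card : ℝ) ^ 2 :=
          sq_sum_le_card_mul_sum_sq
      _ = ((A - B).card : ℝ) * T := by rw [h2]
  -- Fourier bound on T
  have hT : (T : ℝ) ≤ (A.card : ℝ) ^ 2 * (B.card : ℝ) ^ 2 / Q ^ d
      + (C * Q ^ β) ^ 2 * (A.card : ℝ) * (Q ^ d) ^ 2 := by
    have hE := real_energy χ hχ A B
    have hsplit : ∑ m : Fin d → F, ‖ftE χ A m‖ ^ 2 * ‖ftE χ B m‖ ^ 2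
        = ‖ftE χ A 0‖ ^ 2 * ‖ftE χ B 0‖ ^ 2
          + ∑ m ∈ Finset.univ.erase 0,
              ‖ftE χ A m‖ ^ 2 * ‖ftE χ B m‖ ^ 2 :=
      (Finset.add_sum_erase _ _ (Finset.mem_univ 0)).symm
    have htail : ∑ m ∈ Finset.univ.erase 0,
          ‖ftE χ A m‖ ^ 2 * ‖ftE χ B m‖ ^ 2
        ≤ (C * Q ^ β) ^ 2 * ((A.card : ℝ) / Q ^ d) := by
      calc ∑ m ∈ Finset.univ.erase 0,
            ‖ftE χ A m‖ ^ 2 * ‖ftE χ B m‖ ^ 2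
          ≤ ∑ m ∈ Finset.univ.erase 0, ‖ftE χ A m‖ ^ 2 * (C * Q ^ β) ^ 2 := by
            refine Finset.sum_le_sum fun m hm => ?_
            have hm0 : m ≠ 0 := Finset.ne_of_mem_erase hm
            have h4 : ‖ftE χ B m‖ ^ 2 ≤ (C * Q ^ β) ^ 2 :=
              pow_le_pow_left₀ (norm_nonneg _) (hdecay m hm0) 2
            exact mul_le_mul_of_nonneg_left h4 (by positivity)
        _ = (C * Q ^ β) ^ 2 * ∑ m ∈ Finset.univ.erase 0, ‖ftE χ A m‖ ^ 2 := by
            rw [← Finset.sum_mul, mul_comm]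
        _ ≤ (C * Q ^ β) ^ 2 * ((A.card : ℝ) / Q ^ d) := by
            refine mul_le_mul_of_nonneg_left ?_ (by positivity)
            rw [← real_planch χ hχ A]
            exact Finset.sum_le_sum_of_subset_of_nonneg (Finset.subset_univ _)
              (fun m _ _ => by positivity)
    have h0 : ‖ftE χ A 0‖ ^ 2 * ‖ftE χ B 0‖ ^ 2
        = ((A.card : ℝ) / Q ^ d) ^ 2 * ((B.card : ℝ) / Q ^ d) ^ 2 := by
      rw [ftE_zero_abs, ftE_zero_abs]
    have h6 : (T : ℝ) / (Q ^ d) ^ 3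
        ≤ ((A.card : ℝ) / Q ^ d) ^ 2 * ((B.card : ℝ) / Q ^ d) ^ 2
          + (C * Q ^ β) ^ 2 * ((A.card : ℝ) / Q ^ d) := by
      rw [← hE, hsplit, h0]
      exact add_le_add_right htail _
    calc (T : ℝ) = ((T : ℝ) / (Q ^ d) ^ 3) * (Q ^ d) ^ 3 := by field_simp
      _ ≤ (((A.card : ℝ) / Q ^ d) ^ 2 * ((B.card : ℝ) / Q ^ d) ^ 2
          + (C * Q ^ β) ^ 2 * ((A.card : ℝ) / Q ^ d)) * (Q ^ d) ^ 3 :=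
          mul_le_mul_of_nonneg_right h6 (by positivity)
      _ = (A.card : ℝ) ^ 2 * (B.card : ℝ) ^ 2 / Q ^ d
          + (C * Q ^ β) ^ 2 * (A.card : ℝ) * (Q ^ d) ^ 2 := by
          field_simp
  have hrw1 : Q ^ (d : ℝ) = Q ^ d := Real.rpow_natCast Q d
  have hrw2 : C ^ 2 * Q ^ (2 * (d : ℝ) + 2 * β) = (C * Q ^ β) ^ 2 * (Q ^ d) ^ 2 := by
    have he : (2 * (d : ℝ) + 2 * β) = ((d : ℝ) + (d : ℝ)) + (β + β) := by ring
    rw [he, Real.rpow_add hQ, Real.rpow_add hQ, Real.rpow_add hQ, Real.rpow_natCast]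
    ring
  rw [hrw1, hrw2]
  exact final_arith _ _ _ _ _ _ ha hb hN hK (Nat.cast_nonneg _) hCS hT
end
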